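/- If k : (a,b) → ℝ is a positive twice differentiable function satisfying k''k = (7/4)(k')² − 4k⁴, then the quantity ((k')² + 16k⁴)·k^(−7/2) is constant on (a,b). -/

import Mathlib

/-- If k > 0 satisfies k''k = (7/4)(k')² − 4k⁴, then
((k')² + 16k⁴)·k^(−7/2) is constant on (a,b). -/
theorem stmt_6 (a b : ℝ) (k : ℝ → ℝ)
    (hpos : ∀ u ∈ Set.Ioo a b, 0 < k u)
    (hdiff : ∀ u ∈ Set.Ioo a b, DifferentiableAt ℝ k u ∧ DifferentiableAt ℝ (deriv k) u)
    (hode : ∀ u ∈ Set.Ioo a b, deriv (deriv k) u * k u =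
      (7 / 4) * (deriv k u) ^ 2 - 4 * (k u) ^ 4) :
    ∃ C : ℝ, ∀ u ∈ Set.Ioo a b,
      ((deriv k u) ^ 2 + 16 * (k u) ^ 4) * (k u) ^ (-(7 : ℝ) / 2) = C := by
  set F : ℝ → ℝ := fun u => ((deriv k u) ^ 2 + 16 * (k u) ^ 4) * (k u) ^ (-(7 : ℝ) / 2)
    with hFdef
  have hF : ∀ u ∈ Set.Ioo a b, HasDerivAt F 0 u := by
    intro u hu
    have hkpos := hpos u hu
    have h1 : HasDerivAt k (deriv k u) u := (hdiff u hu).1.hasDerivAt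
    have h2 : HasDerivAt (deriv k) (deriv (deriv k) u) u := (hdiff u hu).2.hasDerivAt
    have hG : HasDerivAt (fun u => (deriv k u) ^ 2 + 16 * (k u) ^ 4)
        (2 * (deriv k u) ^ 1 * (deriv (deriv k) u) + 16 * (4 * (k u) ^ 3 * (deriv k u))) u := by
      exact (h2.pow 2).add ((h1.pow 4).const_mul 16)
    have hH : HasDerivAt (fun u => (k u) ^ (-(7 : ℝ) / 2))
        (deriv k u * (-(7 : ℝ) / 2) * (k u) ^ (-(7 : ℝ) / 2 - 1)) u :=
      h1.rpow_const (Or.inl hkpos.ne')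
    have hmul := hG.mul hH
    refine hmul.congr_deriv (Eq.symm ?_)
    have hsplit : (k u) ^ (-(7 : ℝ) / 2) = (k u) * (k u) ^ (-(7 : ℝ) / 2 - 1) := by
      rw [← Real.rpow_one_add' hkpos.le (by norm_num)]
      norm_num
    have hode' := hode u hu
    set A := k u
    set B := deriv k u
    set C := deriv (deriv k) u
    set P := A ^ (-(7 : ℝ) / 2 - 1)
    rw [hsplit]
    linear_combination (-2 * P * B) * hode'
  rcases Set.eq_empty_or_nonempty (Set.Ioo a b) with he | ⟨u₀, hu₀⟩
  · exact ⟨0, fun u hu => by rw [he] at hu; exact absurd hu (Set.notMem_empty u)⟩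
  · refine ⟨F u₀, fun u hu => ?_⟩
    have hconv : Convex ℝ (Set.Ioo a b) := convex_Ioo a b
    have hopen : IsOpen (Set.Ioo a b) := isOpen_Ioo
    have hdiffF : DifferentiableOn ℝ F (Set.Ioo a b) := fun x hx =>
      ((hF x hx).differentiableAt).differentiableWithinAt
    have hzero : ∀ x ∈ Set.Ioo a b, fderivWithin ℝ F (Set.Ioo a b) x = 0 := by
      intro x hx
      rw [fderivWithin_of_isOpen hopen hx, (hF x hx).hasFDerivAt.fderiv]
      exact ContinuousLinearMap.ext fun y => by simp
    exact hconv.is_const_of_fderivWithin_eq_zero hdiffF hzero hu hu₀
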